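/- Let s(z) = ∏_{i=1}^n z_i on ℂⁿ, f = Re(s), and restrict to {Im(s) = 0}. Along a solution curve of V = ∇f/|∇f|² (metric g^{īj} = δ_{ij} + O(|z|)) staying outside the cone neighborhood U_ε = {ρ < ε|z|²} of S₀⁺ = {ρ = 0}, where ρ = max_{i,j}||z_i|² − |z_j|²|, one has the differential inequality d(log ρ)/dt ≤ C/ t^{1−1/n} (with t = s as parameter), and consequently lim_{t→0} ρ(t) ≠ 0. -/

import Mathlib

/-- `s(z) = ∏ᵢ zᵢ` on ℂⁿ. -/
def sProd (n : ℕ) (z : Fin n → ℂ) : ℂ := ∏ i, z i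

/-- `ρ(z) = max_{i,j} | |z_i|² − |z_j|² |`, whose zero cone is `S₀⁺`. -/
noncomputable def rhoMax (n : ℕ) (z : Fin n → ℂ) : ℝ :=
  ⨆ i : Fin n, ⨆ j : Fin n, |Complex.normSq (z i) - Complex.normSq (z j)|

/-- The vector field `V = ∇f/|∇f|²` for `f = Re(∏ᵢ zᵢ)` and a perturbed metric
`g^{īj} = δ_{ij} + O(|z|)`:
`V = Re((∑ᵢ (zᵢ/|zᵢ|²) g^{īj} ∂_j)/(s ∑ᵢ 1/|zᵢ|²))·(1 + O(|z|))`,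
given by its complex components; `g` are the metric coefficients and `u` the scalar
`O(|z|)` correction. -/
noncomputable def Vpert (n : ℕ) (g : (Fin n → ℂ) → Fin n → Fin n → ℂ)
    (u : (Fin n → ℂ) → ℝ) (z : Fin n → ℂ) : Fin n → ℂ := fun j =>
  ((1 + u z : ℝ) : ℂ) *
    ((∑ i, z i / (Complex.normSq (z i) : ℂ) * g z i j) /
      (sProd n z * ∑ i, ((Complex.normSq (z i) : ℂ))⁻¹))

namespace Stmt18Aux

open Complex Finset Set Filter

noncomputable def pairF (n : ℕ) (z : Fin n → ℂ) (p : Fin n × Fin n) : ℝ :=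
  |Complex.normSq (z p.1) - Complex.normSq (z p.2)|

variable {n : ℕ}

lemma univ_ne (hn : 0 < n) : (Finset.univ : Finset (Fin n × Fin n)).Nonempty := by
  haveI : NeZero n := ⟨hn.ne'⟩
  exact Finset.univ_nonempty

lemma rhoMax_eq_sup' (hn : 0 < n) (z : Fin n → ℂ) :
    rhoMax n z = Finset.univ.sup' (univ_ne hn) (pairF n z) := by
  haveI : NeZero n := ⟨hn.ne'⟩
  apply le_antisymm
  · apply ciSup_le; intro i; apply ciSup_le; intro j
    exact Finset.le_sup' (pairF n z) (Finset.mem_univ (i, j))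
  · apply Finset.sup'_le; intro p _
    calc pairF n z p ≤ ⨆ j, |Complex.normSq (z p.1) - Complex.normSq (z j)| :=
          le_ciSup (f := fun j => |Complex.normSq (z p.1) - Complex.normSq (z j)|)
            (Set.Finite.bddAbove (Set.finite_range _)) p.2
      _ ≤ rhoMax n z :=
          le_ciSup (f := fun i => ⨆ j, |Complex.normSq (z i) - Complex.normSq (z j)|)
            (Set.Finite.bddAbove (Set.finite_range _)) p.1

lemma pairF_le (hn : 0 < n) (z : Fin n → ℂ) (p : Fin n × Fin n) :
    pairF n z p ≤ rhoMax n z := by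
  rw [rhoMax_eq_sup' hn]
  exact Finset.le_sup' (pairF n z) (Finset.mem_univ p)

lemma exists_pair (hn : 0 < n) (z : Fin n → ℂ) :
    ∃ p : Fin n × Fin n, rhoMax n z = pairF n z p := by
  obtain ⟨p, _, hp⟩ := Finset.exists_mem_eq_sup' (univ_ne hn) (pairF n z)
  exact ⟨p, by rw [rhoMax_eq_sup' hn, hp]⟩

lemma continuous_rhoMax (hn : 0 < n) : Continuous (rhoMax n) := by
  have hfun : rhoMax n = fun z => Finset.univ.sup' (univ_ne hn) (fun p => pairF n z p) :=
    funext fun z => rhoMax_eq_sup' hn z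
  rw [hfun]
  refine continuous_iff_continuousAt.2 fun z => ?_
  refine ContinuousAt.finset_sup'_apply (univ_ne hn) fun p _ => ?_
  exact (((Complex.continuous_normSq.comp (continuous_apply p.1)).sub
    (Complex.continuous_normSq.comp (continuous_apply p.2))).abs).continuousAt


lemma hasDerivAt_normSq_comp {c : ℝ → ℂ} {v : ℂ} {t : ℝ} (hc : HasDerivAt c v t) :
    HasDerivAt (fun τ => Complex.normSq (c τ)) (2 * (v * (starRingEnd ℂ) (c t)).re) t := by
  have hconj : HasDerivAt (fun τ => (starRingEnd ℂ) (c τ)) ((starRingEnd ℂ) v) t := by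
    have := (Complex.conjCLE.toContinuousLinearMap.hasFDerivAt
      (x := c t)).comp_hasDerivAt t hc
    simpa [Function.comp_def] using this
  have hmul := hc.mul hconj
  have hre := (Complex.reCLM.hasFDerivAt
    (x := c t * (starRingEnd ℂ) (c t))).comp_hasDerivAt t hmul
  have hfun : (fun τ => Complex.reCLM (c τ * (starRingEnd ℂ) (c τ)))
      = fun τ => Complex.normSq (c τ) := by
    funext τ
    simp [Complex.mul_conj]
  rw [show (⇑Complex.reCLM ∘ (c * fun τ => (starRingEnd ℂ) (c τ)))
      = fun τ => Complex.reCLM (c τ * (starRingEnd ℂ) (c τ)) from rfl, hfun] at hre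
  refine hre.congr_deriv ?_
  simp [Complex.add_re, Complex.mul_re, Complex.conj_re, Complex.conj_im]
  ring

variable {n : ℕ}

lemma hasDerivAt_hpair {φ : ℝ → Fin n → ℂ} {V : Fin n → ℂ} {t : ℝ}
    (hφ : HasDerivAt φ V t) (i j : Fin n) :
    HasDerivAt (fun τ => Complex.normSq (φ τ i) - Complex.normSq (φ τ j))
      ((2 * (V i * (starRingEnd ℂ) (φ t i) - V j * (starRingEnd ℂ) (φ t j))).re) t := by
  have hi := hasDerivAt_normSq_comp ((hasDerivAt_pi.1 hφ) i)
  have hj := hasDerivAt_normSq_comp ((hasDerivAt_pi.1 hφ) j)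
  refine (hi.sub hj).congr_deriv ?_
  simp [Complex.sub_re, Complex.mul_re]
  ring

end Stmt18Aux
namespace Stmt18Aux
open Complex Finset Set Filter

variable {n : ℕ}

/-- S₁ ≤ t^{1/n} S₂ : the analytic inequality. -/
lemma sum_inv_le (hn : 0 < n) {t : ℝ} (ht : 0 < t) {z : Fin n → ℂ}
    (hz : ∀ i, z i ≠ 0) (hprod : ∏ m, ‖z m‖ = t) :
    (∑ m, (‖z m‖)⁻¹) ≤ t ^ ((1 : ℝ)/n) * ∑ m, ((‖z m‖)⁻¹) ^ 2 := by
  set b : Fin n → ℝ := fun m => (‖z m‖)⁻¹ with hb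
  have hbpos : ∀ m, 0 < b m := fun m => inv_pos.2 (norm_pos_iff.mpr (hz m))
  set S1 : ℝ := ∑ m, b m with hS1
  set S2 : ℝ := ∑ m, b m ^ 2 with hS2
  haveI : NeZero n := ⟨hn.ne'⟩
  have hS1pos : 0 < S1 := Finset.sum_pos (fun m _ => hbpos m) Finset.univ_nonempty
  have hS2pos : 0 < S2 := Finset.sum_pos (fun m _ => pow_pos (hbpos m) 2) Finset.univ_nonempty
  have hnpos : (0:ℝ) < n := Nat.cast_pos.2 hn
  have hCS : S1 ^ 2 ≤ (n : ℝ) * S2 := by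
    have := sq_sum_le_card_mul_sum_sq (s := (Finset.univ : Finset (Fin n))) (f := b)
    simpa using this
  have hprodb : ∏ m, b m = t⁻¹ := by
    have h1 : ∏ m, b m = ∏ m, (‖z m‖)⁻¹ := rfl
    rw [h1, ← hprod]
    exact Finset.prod_inv_distrib (f := fun m => ‖z m‖)
  -- AM-GM
  have hAM : t ^ (-((2:ℝ)/n)) ≤ S2 / n := by
    have hgm := Real.geom_mean_le_arith_mean_weighted Finset.univ
      (fun _ => (1:ℝ)/n) (fun m => b m ^ 2)
      (fun m _ => by positivity) (by
        rw [Finset.sum_const]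
        simp only [Finset.card_univ, Fintype.card_fin, nsmul_eq_mul]
        field_simp)
      (fun m _ => by positivity)
    have hlhs : ∏ m, (b m ^ 2) ^ ((1:ℝ)/n) = t ^ (-((2:ℝ)/n)) := by
      rw [Real.finset_prod_rpow _ _ (fun m _ => by positivity) _]
      rw [show (∏ m, b m ^ 2) = (∏ m, b m) ^ 2 from Finset.prod_pow _ _ _, hprodb]
      rw [← Real.rpow_neg_one t, ← Real.rpow_natCast (t ^ (-1:ℝ)) 2,
        ← Real.rpow_mul ht.le, ← Real.rpow_mul ht.le]
      congr 1
      push_cast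
      ring
    have hrhs : ∑ m, (1:ℝ)/n * b m ^ 2 = S2 / n := by
      rw [← Finset.mul_sum]
      ring
    calc t ^ (-((2:ℝ)/n)) = ∏ m, (b m ^ 2) ^ ((1:ℝ)/n) := hlhs.symm
      _ ≤ ∑ m, (1:ℝ)/n * b m ^ 2 := hgm
      _ = S2 / n := hrhs
  have key2 : (n:ℝ) ≤ t ^ ((2:ℝ)/n) * S2 := by
    have h1 : (n:ℝ) * t ^ (-((2:ℝ)/n)) ≤ S2 := by
      calc (n:ℝ) * t ^ (-((2:ℝ)/n)) ≤ (n:ℝ) * (S2 / n) :=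
            mul_le_mul_of_nonneg_left hAM hnpos.le
        _ = S2 := by field_simp
    have h2 := mul_le_mul_of_nonneg_left h1 (le_of_lt (Real.rpow_pos_of_pos ht ((2:ℝ)/n)))
    calc (n:ℝ) = t ^ ((2:ℝ)/n) * ((n:ℝ) * t ^ (-((2:ℝ)/n))) := by
          rw [show t ^ ((2:ℝ)/n) * ((n:ℝ) * t ^ (-((2:ℝ)/n)))
              = (t ^ ((2:ℝ)/n) * t ^ (-((2:ℝ)/n))) * n by ring,
            ← Real.rpow_add ht]
          norm_num
      _ ≤ t ^ ((2:ℝ)/n) * S2 := h2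
  have hpow2 : (t ^ ((1:ℝ)/n)) ^ 2 = t ^ ((2:ℝ)/n) := by
    rw [← Real.rpow_natCast (t ^ ((1:ℝ)/n)) 2, ← Real.rpow_mul ht.le]
    congr 1
    push_cast
    ring
  have hsq : S1 ^ 2 ≤ (t ^ ((1:ℝ)/n) * S2) ^ 2 := by
    calc S1 ^ 2 ≤ (n : ℝ) * S2 := hCS
      _ ≤ (t ^ ((2:ℝ)/n) * S2) * S2 := mul_le_mul_of_nonneg_right key2 hS2pos.le
      _ = (t ^ ((1:ℝ)/n) * S2) ^ 2 := by rw [mul_pow, hpow2]; ring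
  have h1 := Real.sqrt_le_sqrt hsq
  rwa [Real.sqrt_sq hS1pos.le, Real.sqrt_sq (by positivity)] at h1

end Stmt18Aux
namespace Stmt18Aux
open Complex Finset Set Filter

variable {n : ℕ}

set_option maxHeartbeats 1000000 in
lemma key_bound (hn : 0 < n) (g : (Fin n → ℂ) → Fin n → Fin n → ℂ)
    (u : (Fin n → ℂ) → ℝ) (K : ℝ) (hK : 0 < K)
    (hg : ∀ z i j, ‖g z i j - if i = j then 1 else 0‖ ≤ K * ‖z‖)
    (hu : ∀ z, |u z| ≤ K * ‖z‖)
    {t : ℝ} (ht : 0 < t) {z : Fin n → ℂ} (hs : sProd n z = (t : ℂ))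
    (hz : ∀ i, z i ≠ 0) (hb : ‖z‖ ≤ 1) (i j : Fin n) :
    ‖Vpert n g u z i * (starRingEnd ℂ) (z i)
      - Vpert n g u z j * (starRingEnd ℂ) (z j)‖
      ≤ 2 * K * (1 + K) * ‖z‖ ^ 2 * t ^ ((1:ℝ)/n - 1) := by
  haveI : NeZero n := ⟨hn.ne'⟩
  have hnsq : ∀ k, (Complex.normSq (z k) : ℂ) ≠ 0 := fun k =>
    Complex.ofReal_ne_zero.2 (Complex.normSq_pos.2 (hz k)).ne'
  set S2c : ℂ := ∑ m, ((Complex.normSq (z m) : ℂ))⁻¹ with hS2c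
  set S2 : ℝ := ∑ m, ((‖z m‖)⁻¹) ^ 2 with hS2
  set S1 : ℝ := ∑ m, (‖z m‖)⁻¹ with hS1
  have habs : ∀ m, Complex.normSq (z m) = ‖z m‖ ^ 2 := fun m =>
    Complex.normSq_eq_norm_sq (z m)
  have hS2cast : S2c = ((S2 : ℝ) : ℂ) := by
    rw [hS2c, hS2]
    push_cast
    refine Finset.sum_congr rfl fun m _ => ?_
    rw [habs m]
    push_cast
    rw [inv_pow]
  have hS2pos : 0 < S2 := Finset.sum_pos
    (fun m _ => pow_pos (inv_pos.2 (norm_pos_iff.mpr (hz m))) 2) Finset.univ_nonempty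
  set E : Fin n → ℂ := fun k =>
    ∑ m, z m / (Complex.normSq (z m) : ℂ) * (g z m k - if m = k then 1 else 0)
      * (starRingEnd ℂ) (z k) with hE
  have hVk : ∀ k, Vpert n g u z k * (starRingEnd ℂ) (z k)
      = ((1 + u z : ℝ) : ℂ) * ((1 + E k) / ((t:ℂ) * S2c)) := by
    intro k
    have hNk : (∑ m, z m / (Complex.normSq (z m) : ℂ) * g z m k) * (starRingEnd ℂ) (z k)
        = 1 + E k := by
      rw [Finset.sum_mul]
      have hsplit : ∀ m ∈ (Finset.univ : Finset (Fin n)),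
          z m / (Complex.normSq (z m) : ℂ) * g z m k * (starRingEnd ℂ) (z k)
          = (if m = k then z m / (Complex.normSq (z m) : ℂ) * (starRingEnd ℂ) (z k) else 0)
            + z m / (Complex.normSq (z m) : ℂ) * (g z m k - if m = k then 1 else 0)
              * (starRingEnd ℂ) (z k) := by
        intro m _
        by_cases h : m = k <;> simp [h] <;> try ring
      rw [Finset.sum_congr rfl hsplit, Finset.sum_add_distrib]
      have h1 : ∑ m, (if m = k then z m / (Complex.normSq (z m) : ℂ)
          * (starRingEnd ℂ) (z k) else 0) = 1 := by
        rw [Finset.sum_ite_eq' Finset.univ k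
          (fun m => z m / (Complex.normSq (z m) : ℂ) * (starRingEnd ℂ) (z k))]
        simp only [Finset.mem_univ, if_true]
        rw [div_mul_eq_mul_div, Complex.mul_conj, div_self (hnsq k)]
      rw [h1]
    unfold Vpert
    rw [hs, ← hS2c]
    calc ((1 + u z : ℝ) : ℂ) * ((∑ m, z m / (Complex.normSq (z m) : ℂ) * g z m k)
          / ((t:ℂ) * S2c)) * (starRingEnd ℂ) (z k)
        = ((1 + u z : ℝ) : ℂ) * (((∑ m, z m / (Complex.normSq (z m) : ℂ) * g z m k)
          * (starRingEnd ℂ) (z k)) / ((t:ℂ) * S2c)) := by ring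
      _ = ((1 + u z : ℝ) : ℂ) * ((1 + E k) / ((t:ℂ) * S2c)) := by rw [hNk]
  have hdiff : Vpert n g u z i * (starRingEnd ℂ) (z i)
      - Vpert n g u z j * (starRingEnd ℂ) (z j)
      = ((1 + u z : ℝ) : ℂ) * ((E i - E j) / ((t:ℂ) * S2c)) := by
    rw [hVk i, hVk j]
    ring
  have hnormk : ∀ k, ‖z k‖ ≤ ‖z‖ := fun k => by
    exact norm_le_pi_norm z k
  have hEbound : ∀ k, ‖E k‖ ≤ K * ‖z‖ ^ 2 * S1 := by
    intro k
    simp only [hE]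
    calc ‖∑ m, z m / (Complex.normSq (z m) : ℂ)
          * (g z m k - if m = k then 1 else 0) * (starRingEnd ℂ) (z k)‖
        ≤ ∑ m, ‖z m / (Complex.normSq (z m) : ℂ)
            * (g z m k - if m = k then 1 else 0) * (starRingEnd ℂ) (z k)‖ :=
          norm_sum_le _ _
      _ ≤ ∑ m, (‖z m‖)⁻¹ * (K * ‖z‖ * ‖z‖) := by
          refine Finset.sum_le_sum fun m _ => ?_
          rw [norm_mul, norm_mul, norm_div]
          have h1 : ‖(Complex.normSq (z m) : ℂ)‖ = ‖z m‖ ^ 2 := by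
            rw [Complex.norm_real, Real.norm_eq_abs, _root_.abs_of_nonneg (Complex.normSq_nonneg _), habs m]
          rw [h1, Complex.norm_conj]
          have h2 : ‖z m‖ / ‖z m‖ ^ 2 = (‖z m‖)⁻¹ := by
            rw [pow_two]
            rw [div_mul_eq_div_div, div_self (norm_ne_zero_iff.mpr (hz m)), one_div]
          rw [h2]
          calc (‖z m‖)⁻¹ * ‖g z m k - if m = k then 1 else 0‖
                * ‖z k‖
              ≤ (‖z m‖)⁻¹ * (K * ‖z‖) * ‖z‖ := by
                refine mul_le_mul ?_ (hnormk k) (norm_nonneg _) (by positivity)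
                exact mul_le_mul_of_nonneg_left (hg z m k) (by positivity)
            _ = (‖z m‖)⁻¹ * (K * ‖z‖ * ‖z‖) := by ring
      _ = K * ‖z‖ ^ 2 * S1 := by
          rw [← Finset.sum_mul, ← hS1]
          ring
  have hone : ‖((1 + u z : ℝ) : ℂ)‖ ≤ 1 + K := by
    rw [Complex.norm_real, Real.norm_eq_abs]
    calc |1 + u z| ≤ |(1:ℝ)| + |u z| := abs_add_le _ _
      _ ≤ 1 + K * ‖z‖ := by rw [abs_one]; exact add_le_add_right (hu z) 1
      _ ≤ 1 + K := by nlinarith [hK.le, hb, norm_nonneg z]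
  have hprod : ∏ m, ‖z m‖ = t := by
    have : ‖sProd n z‖ = ‖(t:ℂ)‖ := by rw [hs]
    rw [sProd, norm_prod] at this
    rwa [Complex.norm_real, Real.norm_eq_abs, abs_of_pos ht] at this
  have hS1le : S1 ≤ t ^ ((1:ℝ)/n) * S2 := sum_inv_le hn ht hz hprod
  have hEd : ‖E i - E j‖ ≤ 2 * (K * ‖z‖ ^ 2 * S1) := by
    calc ‖E i - E j‖ ≤ ‖E i‖ + ‖E j‖ := by
          exact norm_sub_le _ _
      _ ≤ 2 * (K * ‖z‖ ^ 2 * S1) := by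
          have := hEbound i
          have := hEbound j
          linarith
  have habsden : ‖(t:ℂ) * S2c‖ = t * S2 := by
    rw [norm_mul, hS2cast, Complex.norm_real, Real.norm_eq_abs, Complex.norm_real, Real.norm_eq_abs,
      abs_of_pos ht, abs_of_pos hS2pos]
  clear_value S2c S2 S1 E
  have hP : (0:ℝ) < t ^ ((1:ℝ)/n) := Real.rpow_pos_of_pos ht _
  have h6 : 2*(K*‖z‖^2) * S1 ≤ 2*(K*‖z‖^2) * (t^((1:ℝ)/n)*S2) :=
    mul_le_mul_of_nonneg_left hS1le (by positivity)
  have h7 : ‖E i - E j‖ ≤ 2*(K*‖z‖^2*(t^((1:ℝ)/n)*S2)) := by linarith [hEd]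
  have hq : ‖E i - E j‖ / (t * S2) ≤ 2*K*‖z‖^2 * t^((1:ℝ)/n) / t := by
    rw [div_le_div_iff₀ (by positivity) ht]
    calc ‖E i - E j‖ * t ≤ (2*(K*‖z‖^2*(t^((1:ℝ)/n)*S2))) * t :=
          mul_le_mul_of_nonneg_right h7 ht.le
      _ = 2*K*‖z‖^2 * t^((1:ℝ)/n) * (t * S2) := by ring
  calc ‖Vpert n g u z i * (starRingEnd ℂ) (z i)
        - Vpert n g u z j * (starRingEnd ℂ) (z j)‖
      = ‖((1 + u z : ℝ) : ℂ)‖ * (‖E i - E j‖ / (t*S2)) := by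
        rw [hdiff, norm_mul, norm_div, habsden]
    _ ≤ (1+K) * (2*K*‖z‖^2 * t^((1:ℝ)/n) / t) :=
        mul_le_mul hone hq (by positivity) (by positivity)
    _ = 2*K*(1+K)*‖z‖^2 * t^((1:ℝ)/n - 1) := by
        rw [Real.rpow_sub ht, Real.rpow_one]
        ring

end Stmt18Aux
namespace Stmt18Aux
open Complex Finset Set Filter

variable {n : ℕ}

lemma log_deriv_bound (hn : 0 < n) {g : (Fin n → ℂ) → Fin n → Fin n → ℂ}
    {u : (Fin n → ℂ) → ℝ} {K ε t₀ : ℝ} (hK : 0 < K) (hε : 0 < ε)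
    (hg : ∀ z i j, ‖g z i j - if i = j then 1 else 0‖ ≤ K * ‖z‖)
    (hu : ∀ z, |u z| ≤ K * ‖z‖) {φ : ℝ → Fin n → ℂ}
    (hφd : ∀ t ∈ Set.Ioc (0 : ℝ) t₀, HasDerivAt φ (Vpert n g u (φ t)) t)
    (hpar : ∀ t ∈ Set.Ioc (0 : ℝ) t₀, sProd n (φ t) = (t : ℂ))
    (hnz : ∀ t ∈ Set.Ioc (0 : ℝ) t₀, ∀ i, φ t i ≠ 0)
    (hbd : ∀ t ∈ Set.Ioc (0 : ℝ) t₀, ‖φ t‖ ≤ 1)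
    (hout : ∀ t ∈ Set.Ioc (0 : ℝ) t₀, ε * ‖φ t‖ ^ 2 ≤ rhoMax n (φ t))
    {t : ℝ} (ht : t ∈ Set.Ioc (0 : ℝ) t₀) {p : Fin n × Fin n}
    (hact : rhoMax n (φ t) = pairF n (φ t) p) :
    ∃ D : ℝ,
      HasDerivAt (fun τ => Complex.normSq (φ τ p.1) - Complex.normSq (φ τ p.2)) D t ∧
      (Complex.normSq (φ t p.1) - Complex.normSq (φ t p.2) ≠ 0) ∧
      |D / (Complex.normSq (φ t p.1) - Complex.normSq (φ t p.2))|
        ≤ (4*K*(1+K)/ε) * t ^ ((1:ℝ)/n - 1) := by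
  obtain ⟨ht0, htt₀⟩ := ht
  set z := φ t with hz
  have hzz : ∀ i, z i ≠ 0 := hnz t ⟨ht0, htt₀⟩
  have hznz : z ≠ 0 := fun h => hzz ⟨0, hn⟩ (by rw [h]; rfl)
  have hnormz : 0 < ‖z‖ := norm_pos_iff.2 hznz
  have hρ : 0 < rhoMax n z := lt_of_lt_of_le (by positivity) (hout t ⟨ht0, htt₀⟩)
  have habsh : |Complex.normSq (z p.1) - Complex.normSq (z p.2)| = rhoMax n z := by
    rw [hact]; rfl
  have hhne : Complex.normSq (z p.1) - Complex.normSq (z p.2) ≠ 0 := by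
    intro h0
    rw [h0, abs_zero] at habsh
    exact hρ.ne habsh
  have hDer := hasDerivAt_hpair (hφd t ⟨ht0, htt₀⟩) p.1 p.2
  refine ⟨_, hDer, hhne, ?_⟩
  have hkey := key_bound hn g u K hK hg hu ht0 (hpar t ⟨ht0, htt₀⟩) hzz
    (hbd t ⟨ht0, htt₀⟩) p.1 p.2
  have hDb : |(2 * (Vpert n g u z p.1 * (starRingEnd ℂ) (z p.1)
      - Vpert n g u z p.2 * (starRingEnd ℂ) (z p.2))).re|
      ≤ 4*K*(1+K) * ‖z‖ ^ 2 * t ^ ((1:ℝ)/n - 1) := by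
    calc |(2 * (Vpert n g u z p.1 * (starRingEnd ℂ) (z p.1)
          - Vpert n g u z p.2 * (starRingEnd ℂ) (z p.2))).re|
        ≤ ‖2 * (Vpert n g u z p.1 * (starRingEnd ℂ) (z p.1)
          - Vpert n g u z p.2 * (starRingEnd ℂ) (z p.2))‖ := Complex.abs_re_le_norm _
      _ = 2 * ‖Vpert n g u z p.1 * (starRingEnd ℂ) (z p.1)
          - Vpert n g u z p.2 * (starRingEnd ℂ) (z p.2)‖ := by
          rw [norm_mul]
          norm_num
      _ ≤ 2 * (2 * K * (1 + K) * ‖z‖ ^ 2 * t ^ ((1:ℝ)/n - 1)) := by linarith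
      _ = 4*K*(1+K) * ‖z‖ ^ 2 * t ^ ((1:ℝ)/n - 1) := by ring
  have hd1 : ε * ‖z‖ ^ 2 ≤ |Complex.normSq (z p.1) - Complex.normSq (z p.2)| := by
    rw [habsh]
    exact hout t ⟨ht0, htt₀⟩
  rw [abs_div]
  calc |(2 * (Vpert n g u z p.1 * (starRingEnd ℂ) (z p.1)
        - Vpert n g u z p.2 * (starRingEnd ℂ) (z p.2))).re|
        / |Complex.normSq (z p.1) - Complex.normSq (z p.2)|
      ≤ (4*K*(1+K) * ‖z‖ ^ 2 * t ^ ((1:ℝ)/n - 1)) / (ε * ‖z‖ ^ 2) :=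
        div_le_div₀ (by positivity) hDb (by positivity) hd1
    _ = (4*K*(1+K)/ε) * t ^ ((1:ℝ)/n - 1) := by
        field_simp

end Stmt18Aux
open Stmt18Aux

set_option maxHeartbeats 1000000

/-- along a solution curve of `V` (parametrised by `t = s`, staying on
`{Im s = 0}` in the region `‖z‖ ≤ 1`, with all coordinates nonzero) that remains
outside the cone neighbourhood `U_ε = {ρ < ε‖z‖²}` of `S₀⁺ = {ρ = 0}`, one has the
differential inequality `d(log ρ)/dt ≤ C t^{1/n − 1}`, and consequently
`lim_{t→0} ρ(t) ≠ 0`. -/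
theorem stmt_18 (n : ℕ) (hn : 0 < n)
    (g : (Fin n → ℂ) → Fin n → Fin n → ℂ) (u : (Fin n → ℂ) → ℝ)
    (K ε t₀ : ℝ) (hK : 0 < K) (hε : 0 < ε) (ht₀ : 0 < t₀)
    (hg : ∀ z i j, ‖g z i j - if i = j then 1 else 0‖ ≤ K * ‖z‖)
    (hu : ∀ z, |u z| ≤ K * ‖z‖)
    (φ : ℝ → Fin n → ℂ)
    (hφd : ∀ t ∈ Set.Ioc (0 : ℝ) t₀, HasDerivAt φ (Vpert n g u (φ t)) t)
    (hpar : ∀ t ∈ Set.Ioc (0 : ℝ) t₀, sProd n (φ t) = (t : ℂ))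
    (hnz : ∀ t ∈ Set.Ioc (0 : ℝ) t₀, ∀ i, φ t i ≠ 0)
    (hbd : ∀ t ∈ Set.Ioc (0 : ℝ) t₀, ‖φ t‖ ≤ 1)
    (hout : ∀ t ∈ Set.Ioc (0 : ℝ) t₀, ε * ‖φ t‖ ^ 2 ≤ rhoMax n (φ t)) :
    (∃ C : ℝ, 0 < C ∧ ∀ t ∈ Set.Ioc (0 : ℝ) t₀, ∀ d : ℝ,
      HasDerivAt (fun τ => Real.log (rhoMax n (φ τ))) d t →
        d ≤ C * t ^ ((1 : ℝ) / n - 1)) ∧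
    ¬ Filter.Tendsto (fun t => rhoMax n (φ t)) (nhdsWithin 0 (Set.Ioi 0)) (nhds 0) := by
  have hC0 : (0:ℝ) < 4*K*(1+K)/ε := by positivity
  have hρpos : ∀ t ∈ Set.Ioc (0:ℝ) t₀, 0 < rhoMax n (φ t) := by
    intro t ht
    have hzz : ∀ i, φ t i ≠ 0 := hnz t ht
    have hznz : φ t ≠ 0 := fun h => hzz ⟨0, hn⟩ (by rw [h]; rfl)
    have hnormz : 0 < ‖φ t‖ := norm_pos_iff.2 hznz
    exact lt_of_lt_of_le (by positivity) (hout t ht)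
  -- Part 1 key fact, also used for part 2.
  have main : ∀ t ∈ Set.Ioc (0:ℝ) t₀, ∀ d : ℝ,
      HasDerivAt (fun τ => Real.log (rhoMax n (φ τ))) d t →
        d ≤ (4*K*(1+K)/ε) * t ^ ((1 : ℝ) / n - 1) := by
    intro t ht d hd
    obtain ⟨p, hp⟩ := exists_pair hn (φ t)
    obtain ⟨D, hDer, hhne, hDb⟩ :=
      log_deriv_bound hn hK hε hg hu hφd hpar hnz hbd hout ht hp
    have hM : HasDerivAt
        (fun τ => Real.log (Complex.normSq (φ τ p.1) - Complex.normSq (φ τ p.2)))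
        (D / (Complex.normSq (φ t p.1) - Complex.normSq (φ t p.2))) t := hDer.log hhne
    have hpos : ∀ᶠ τ in nhds t,
        Complex.normSq (φ τ p.1) - Complex.normSq (φ τ p.2) ≠ 0 :=
      hDer.continuousAt.eventually_ne hhne
    have heqt : Real.log (rhoMax n (φ t))
        = Real.log (Complex.normSq (φ t p.1) - Complex.normSq (φ t p.2)) := by
      rw [hp, pairF, Real.log_abs]
    have hmin : IsLocalMin (fun τ => Real.log (rhoMax n (φ τ))
        - Real.log (Complex.normSq (φ τ p.1) - Complex.normSq (φ τ p.2))) t := by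
      show ∀ᶠ τ in nhds t, _ ≤ _
      refine hpos.mono fun τ hτ => ?_
      show Real.log (rhoMax n (φ t))
          - Real.log (Complex.normSq (φ t p.1) - Complex.normSq (φ t p.2)) ≤ _
      rw [heqt, sub_self]
      refine sub_nonneg.2 ?_
      rw [← Real.log_abs]
      exact Real.log_le_log (abs_pos.2 hτ) (pairF_le hn (φ τ) p)
    have hzero := hmin.hasDerivAt_eq_zero (hd.sub hM)
    have hd' : d = D / (Complex.normSq (φ t p.1) - Complex.normSq (φ t p.2)) := by
      linarith [hzero]
    rw [hd']
    exact le_trans (le_abs_self _) hDb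
  refine ⟨⟨4*K*(1+K)/ε, hC0, main⟩, ?_⟩
  intro hten
  set C : ℝ := 4*K*(1+K)/ε with hCdef
  set L : ℝ → ℝ := fun τ => Real.log (rhoMax n (φ τ)) with hLdef
  have hLcont : ∀ x ∈ Set.Ioc (0:ℝ) t₀, ContinuousAt L x := by
    intro x hx
    have hinner : ContinuousAt (fun τ => rhoMax n (φ τ)) x :=
      ((continuous_rhoMax hn).continuousAt).comp (hφd x hx).continuousAt
    exact ContinuousAt.comp (g := Real.log) (f := fun τ => rhoMax n (φ τ))
      (Real.continuousAt_log (hρpos x hx).ne') hinner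
  have key : ∀ a ∈ Set.Ioo (0:ℝ) t₀,
      L t₀ ≤ L a + C * n * (t₀ ^ ((1:ℝ)/n) - a ^ ((1:ℝ)/n)) := by
    intro a ha
    set B : ℝ → ℝ := fun τ => L a + C * n * (τ ^ ((1:ℝ)/n) - a ^ ((1:ℝ)/n)) with hBdef
    have hsub : Set.Icc a t₀ ⊆ Set.Ioc (0:ℝ) t₀ := fun x hx =>
      ⟨lt_of_lt_of_le ha.1 hx.1, hx.2⟩
    have hf : ContinuousOn L (Set.Icc a t₀) := fun x hx =>
      (hLcont x (hsub hx)).continuousWithinAt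
    have haB : L a ≤ B a := by simp [hBdef]
    have hBc : ContinuousOn B (Set.Icc a t₀) :=
      (continuousOn_const.add (continuousOn_const.mul
        (((Real.continuous_rpow_const (by positivity)).continuousOn).sub
          continuousOn_const)))
    have hB' : ∀ x ∈ Set.Ico a t₀,
        HasDerivWithinAt B (C * x ^ ((1:ℝ)/n - 1)) (Set.Ici x) x := by
      intro x hx
      have hx0 : 0 < x := lt_of_lt_of_le ha.1 hx.1
      have h1 : HasDerivAt (fun τ : ℝ => τ ^ ((1:ℝ)/n))
          ((1/n) * x ^ ((1:ℝ)/n - 1)) x :=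
        Real.hasDerivAt_rpow_const (Or.inl hx0.ne')
      have h2 : HasDerivAt B (C * n * ((1/(n:ℝ)) * x ^ ((1:ℝ)/n - 1))) x :=
        ((h1.sub_const _).const_mul (C * n)).const_add (L a)
      have h3 : C * n * ((1/(n:ℝ)) * x ^ ((1:ℝ)/n - 1)) = C * x ^ ((1:ℝ)/n - 1) := by
        have : (n:ℝ) ≠ 0 := Nat.cast_ne_zero.2 hn.ne'
        field_simp
      rw [h3] at h2
      exact h2.hasDerivWithinAt
    have bound : ∀ x ∈ Set.Ico a t₀, ∀ r, C * x ^ ((1:ℝ)/n - 1) < r →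
        ∃ᶠ w in nhdsWithin x (Set.Ioi x), slope L x w < r := by
      intro x hx r hr
      have hxI : x ∈ Set.Ioc (0:ℝ) t₀ := ⟨lt_of_lt_of_le ha.1 hx.1, hx.2.le⟩
      -- a frequently-active pair
      have hex : ∃ p : Fin n × Fin n,
          ∃ᶠ w in nhdsWithin x (Set.Ioi x), rhoMax n (φ w) = pairF n (φ w) p := by
        by_contra hcon
        push_neg at hcon
        have hev : ∀ᶠ w in nhdsWithin x (Set.Ioi x),
            ∀ p : Fin n × Fin n, ¬ rhoMax n (φ w) = pairF n (φ w) p :=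
          Filter.eventually_all.2 fun p => hcon p
        obtain ⟨w, hw⟩ := hev.exists
        obtain ⟨p, hp⟩ := exists_pair hn (φ w)
        exact hw p hp
      obtain ⟨p, hfreq⟩ := hex
      have hFne : Filter.NeBot (nhdsWithin x (Set.Ioi x)
          ⊓ Filter.principal {w | rhoMax n (φ w) = pairF n (φ w) p}) :=
        Filter.frequently_iff_neBot.1 hfreq
      have hcontφ : ContinuousAt φ x := (hφd x hxI).continuousAt
      have hcont1 : ContinuousAt (fun w => rhoMax n (φ w)) x :=
        (continuous_rhoMax hn).continuousAt.comp hcontφ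
      have hcont2 : ContinuousAt (fun w => pairF n (φ w) p) x := by
        have : Continuous (fun z : Fin n → ℂ => pairF n z p) :=
          ((Complex.continuous_normSq.comp (continuous_apply p.1)).sub
            (Complex.continuous_normSq.comp (continuous_apply p.2))).abs
        exact this.continuousAt.comp hcontφ
      have hmemF : ∀ᶠ w in (nhdsWithin x (Set.Ioi x)
          ⊓ Filter.principal {w | rhoMax n (φ w) = pairF n (φ w) p}),
          rhoMax n (φ w) = pairF n (φ w) p :=
        Filter.mem_inf_of_right (Filter.mem_principal_self _)
      have hactx : rhoMax n (φ x) = pairF n (φ x) p := by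
        have h1 : Filter.Tendsto (fun w => rhoMax n (φ w))
            (nhdsWithin x (Set.Ioi x)
              ⊓ Filter.principal {w | rhoMax n (φ w) = pairF n (φ w) p})
            (nhds (rhoMax n (φ x))) :=
          hcont1.tendsto.mono_left (le_trans inf_le_left nhdsWithin_le_nhds)
        have h2 : Filter.Tendsto (fun w => pairF n (φ w) p)
            (nhdsWithin x (Set.Ioi x)
              ⊓ Filter.principal {w | rhoMax n (φ w) = pairF n (φ w) p})
            (nhds (pairF n (φ x) p)) :=
          hcont2.tendsto.mono_left (le_trans inf_le_left nhdsWithin_le_nhds)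
        exact tendsto_nhds_unique (h1.congr' hmemF) h2
      obtain ⟨D, hDer, hhne, hDb⟩ :=
        log_deriv_bound hn hK hε hg hu hφd hpar hnz hbd hout hxI hactx
      have hM : HasDerivAt
          (fun τ => Real.log (Complex.normSq (φ τ p.1) - Complex.normSq (φ τ p.2)))
          (D / (Complex.normSq (φ x p.1) - Complex.normSq (φ x p.2))) x := hDer.log hhne
      have hDlt : D / (Complex.normSq (φ x p.1) - Complex.normSq (φ x p.2)) < r :=
        lt_of_le_of_lt (le_trans (le_abs_self _) hDb) hr
      have hmono : nhdsWithin x (Set.Ioi x) ≤ nhdsWithin x {x}ᶜ :=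
        nhdsWithin_mono x (fun w hw => ne_of_gt hw)
      have hslope' : ∀ᶠ w in nhdsWithin x (Set.Ioi x),
          slope (fun τ => Real.log (Complex.normSq (φ τ p.1) - Complex.normSq (φ τ p.2)))
            x w < r :=
        ((hasDerivAt_iff_tendsto_slope.1 hM).mono_left hmono).eventually_lt_const hDlt
      refine (hfreq.and_eventually hslope').mono ?_
      rintro w ⟨hw1, hw2⟩
      have hLw : L w = Real.log (Complex.normSq (φ w p.1) - Complex.normSq (φ w p.2)) := by
        rw [hLdef]
        show Real.log (rhoMax n (φ w)) = _
        rw [hw1, pairF, Real.log_abs]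
      have hLx : L x = Real.log (Complex.normSq (φ x p.1) - Complex.normSq (φ x p.2)) := by
        rw [hLdef]
        show Real.log (rhoMax n (φ x)) = _
        rw [hactx, pairF, Real.log_abs]
      rw [slope_def_field, hLw, hLx]
      rw [slope_def_field] at hw2
      exact hw2
    have happ := image_le_of_liminf_slope_right_le_deriv_boundary hf haB hBc hB' bound
      (Set.right_mem_Icc.2 ha.2.le)
    simpa [hBdef] using happ
  -- derive contradiction
  set δ : ℝ := Real.exp (L t₀ - C * n * t₀ ^ ((1:ℝ)/n)) with hδdef
  have hδpos : 0 < δ := Real.exp_pos _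
  have hlower : ∀ a ∈ Set.Ioo (0:ℝ) t₀, δ ≤ rhoMax n (φ a) := by
    intro a ha
    have h1 := key a ha
    have h2 : L t₀ - C * n * t₀ ^ ((1:ℝ)/n) ≤ L a := by
      have h3 : (0:ℝ) ≤ a ^ ((1:ℝ)/n) := Real.rpow_nonneg ha.1.le _
      have h4 : (0:ℝ) ≤ C * n := by positivity
      nlinarith [h1]
    calc δ ≤ Real.exp (L a) := Real.exp_le_exp.2 h2
      _ = rhoMax n (φ a) := Real.exp_log (hρpos a ⟨ha.1, ha.2.le⟩)
  have h1 : ∀ᶠ a in nhdsWithin (0:ℝ) (Set.Ioi 0), rhoMax n (φ a) < δ :=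
    hten.eventually_lt_const hδpos
  have h2 : ∀ᶠ a in nhdsWithin (0:ℝ) (Set.Ioi 0), a ∈ Set.Ioo (0:ℝ) t₀ :=
    Filter.eventually_of_mem (Ioo_mem_nhdsGT_of_mem ⟨le_refl 0, ht₀⟩) (fun a ha => ha)
  obtain ⟨a, ha1, ha2⟩ := (h1.and h2).exists
  exact absurd (hlower a ha2) (not_le.2 ha1)
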